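/- Let N, k, t, v, r be natural numbers with k ≥ t ≥ 2, v ≥ 2 and 1 ≤ r ≤ v^t. The number of arrays A : Fin N → Fin k → Fin v for which there exists a t-subset C of columns such that the rows of A restricted to C take at most v^t − r distinct values (i.e., at least r of the v^t possible tuples are missing on C) is at most C(k,t) · C(v^t, r) · ((v^t − r) · v^(k−t))^N. -/

import Mathlib

/-- The number of distinct `t`-tuples `x : C → Fin v` covered by the rows of the array `A`
restricted to the column set `C`. -/
noncomputable def coverCount {N k v : ℕ} (A : Fin N → Fin k → Fin v) (C : Finset (Fin k)) : ℕ :=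
  Nat.card {x : C → Fin v // ∃ i : Fin N, (fun j : C => A i j) = x}

attribute [local instance] Classical.propDecidable

open Finset

/-- restriction of a row to a column set -/
def resC {k v : ℕ} (C : Finset (Fin k)) (f : Fin k → Fin v) : C → Fin v := fun j => f j

def fiberEquiv {k v : ℕ} (C : Finset (Fin k)) (x : C → Fin v) :
    {f : Fin k → Fin v // resC C f = x} ≃ ({j : Fin k // j ∉ C} → Fin v) where
  toFun f := fun j => f.1 j.1
  invFun g := ⟨fun j => if h : j ∈ C then x ⟨j, h⟩ else g ⟨j, h⟩, by
    funext j; simp [resC, j.2]⟩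
  left_inv f := by
    apply Subtype.ext
    funext j
    by_cases h : j ∈ C
    · simp only [h, dif_pos]
      exact (congrFun f.2 ⟨j, h⟩).symm
    · simp [h]
  right_inv g := by
    funext j
    simp [j.2]

lemma fiber_card {k v : ℕ} (C : Finset (Fin k)) (x : C → Fin v) :
    (univ.filter (fun f : Fin k → Fin v => resC C f = x)).card = v ^ (k - C.card) := by
  rw [← Fintype.card_subtype]
  rw [Fintype.card_congr (fiberEquiv C x)]
  rw [Fintype.card_fun, Fintype.card_fin]
  congr 1
  rw [Fintype.card_subtype_compl]
  simp [Fintype.card_coe]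

theorem stmt_10 (N k t v r : ℕ) (ht : 2 ≤ t) (htk : t ≤ k) (hv : 2 ≤ v)
    (hr1 : 1 ≤ r) (hr2 : r ≤ v ^ t) :
    Nat.card {A : Fin N → Fin k → Fin v //
        ∃ C : Finset (Fin k), C.card = t ∧ coverCount A C ≤ v ^ t - r} ≤
      k.choose t * (v ^ t).choose r * ((v ^ t - r) * v ^ (k - t)) ^ N := by
  classical
  set P : (Fin N → Fin k → Fin v) → Prop :=
    fun A => ∃ C : Finset (Fin k), C.card = t ∧ coverCount A C ≤ v ^ t - r with hP
  have hcard : Nat.card {A : Fin N → Fin k → Fin v // P A} = (univ.filter P).card := by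
    rw [Nat.card_eq_fintype_card, Fintype.card_subtype]
  rw [hcard]
  -- good rows for a column set C and missing set S
  set Good : (C : Finset (Fin k)) → Finset (↥C → Fin v) → Finset (Fin k → Fin v) :=
    fun C S => univ.filter (fun f => resC C f ∉ S) with hGood
  set Bad : (C : Finset (Fin k)) → Finset (↥C → Fin v) → Finset (Fin N → Fin k → Fin v) :=
    fun C S => Fintype.piFinset (fun _ : Fin N => Good C S) with hBad
  have hsub : univ.filter P ⊆
      (powersetCard t (univ : Finset (Fin k))).biUnion
        (fun C => (powersetCard r (univ : Finset (↥C → Fin v))).biUnion (fun S => Bad C S)) := by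
    intro A hA
    obtain ⟨C, hC, hcov⟩ := (mem_filter.mp hA).2
    set Covered : Finset (↥C → Fin v) :=
      univ.filter (fun x => ∃ i : Fin N, (fun j : C => A i j) = x) with hCov
    have hcc : coverCount A C = Covered.card := by
      rw [coverCount, Nat.card_eq_fintype_card, Fintype.card_subtype]
    have hcardC : Fintype.card (↥C → Fin v) = v ^ t := by
      rw [Fintype.card_fun, Fintype.card_fin, Fintype.card_coe, hC]
    have hmiss' : r ≤ (univ \ Covered).card := by
      rw [card_sdiff_of_subset (subset_univ _), card_univ, hcardC]
      have h1 : Covered.card ≤ v ^ t - r := hcc ▸ hcov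
      omega
    obtain ⟨S, hSsub, hScard⟩ := Finset.exists_subset_card_eq hmiss'
    rw [mem_biUnion]
    refine ⟨C, mem_powersetCard_univ.mpr hC, ?_⟩
    rw [mem_biUnion]
    refine ⟨S, mem_powersetCard_univ.mpr hScard, ?_⟩
    rw [hBad, Fintype.mem_piFinset]
    intro i
    rw [hGood, mem_filter]
    refine ⟨mem_univ _, fun hin => ?_⟩
    have : resC C (A i) ∈ univ \ Covered := hSsub hin
    rw [mem_sdiff] at this
    exact this.2 (mem_filter.mpr ⟨mem_univ _, ⟨i, rfl⟩⟩)
  calc (univ.filter P).card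
      ≤ ∑ C ∈ powersetCard t (univ : Finset (Fin k)),
          ((powersetCard r (univ : Finset (↥C → Fin v))).biUnion (fun S => Bad C S)).card :=
        le_trans (card_le_card hsub) (card_biUnion_le)
    _ ≤ ∑ C ∈ powersetCard t (univ : Finset (Fin k)),
          ∑ S ∈ powersetCard r (univ : Finset (↥C → Fin v)), (Bad C S).card :=
        Finset.sum_le_sum (fun C _ => card_biUnion_le)
    _ ≤ ∑ C ∈ powersetCard t (univ : Finset (Fin k)),
          ∑ S ∈ powersetCard r (univ : Finset (↥C → Fin v)),
            ((v ^ t - r) * v ^ (k - t)) ^ N := by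
        refine Finset.sum_le_sum (fun C hC => Finset.sum_le_sum (fun S hS => ?_))
        have hCcard : C.card = t := mem_powersetCard_univ.mp hC
        have hScard : S.card = r := (mem_powersetCard.mp hS).2
        have hcardC : Fintype.card (↥C → Fin v) = v ^ t := by
          rw [Fintype.card_fun, Fintype.card_fin, Fintype.card_coe, hCcard]
        have hGcard : (Good C S).card = (v ^ t - r) * v ^ (k - t) := by
          rw [hGood]
          have hfib : ∀ x ∈ (univ \ S),
              ((univ.filter (fun f : Fin k → Fin v => resC C f ∉ S)).filter
                (fun f => resC C f = x)).card = v ^ (k - t) := by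
            intro x hx
            have hxS : x ∉ S := (mem_sdiff.mp hx).2
            have : (univ.filter (fun f : Fin k → Fin v => resC C f ∉ S)).filter
                (fun f => resC C f = x) = univ.filter (fun f => resC C f = x) := by
              rw [filter_filter]
              apply filter_congr
              intro f _
              constructor
              · exact fun h => h.2
              · intro h; exact ⟨h ▸ hxS, h⟩
            rw [this, fiber_card, hCcard]
          rw [card_eq_sum_card_fiberwise (f := resC C) (t := univ \ S)
            (fun f hf => mem_sdiff.mpr ⟨mem_univ _, (mem_filter.mp hf).2⟩)]
          rw [Finset.sum_congr rfl hfib, Finset.sum_const, smul_eq_mul]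
          rw [card_sdiff_of_subset (subset_univ _), card_univ, hcardC, hScard]
        have : (Bad C S).card = (Good C S).card ^ N := by
          rw [hBad, Fintype.card_piFinset]
          simp
        rw [this, hGcard]
    _ = k.choose t * ((v ^ t).choose r * ((v ^ t - r) * v ^ (k - t)) ^ N) := by
        rw [Finset.sum_congr rfl (fun C hC => ?_)]
        · rw [Finset.sum_const, smul_eq_mul, card_powersetCard, card_univ, Fintype.card_fin]
        · rw [Finset.sum_const, smul_eq_mul, card_powersetCard, card_univ]
          have hCcard : C.card = t := mem_powersetCard_univ.mp hC
          rw [Fintype.card_fun, Fintype.card_fin, Fintype.card_coe, hCcard]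
    _ = k.choose t * (v ^ t).choose r * ((v ^ t - r) * v ^ (k - t)) ^ N := by ring
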